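/- Let p : X̃ → X be a semicovering map with p(x̃₀)=x₀, let H̃ ≤ π₁(X̃,x̃₀) and H = p∗(H̃). If X is a strong H-SLT space, then X̃ is a strong H̃-SLT space. -/

import Mathlib

open CategoryTheory unitInterval
open scoped Topology

attribute [local instance] Path.Homotopic.setoid

noncomputable section

/-- The homotopy class of a loop as an element of the fundamental group. -/
def loopClass {X : Type*} [TopologicalSpace X] {x : X} (γ : Path x x) :
    FundamentalGroup X x :=
  ((CategoryTheory.Groupoid.isoEquivHom (FundamentalGroupoid.mk x) (FundamentalGroupoid.mk x)).symm
    (⟦γ⟧ : Path.Homotopic.Quotient x x)).hom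

variable {X : Type*} [TopologicalSpace X]

/-- The Spanier group of a family of subsets of `X`, based at `x`: the subgroup generated by
classes `[α∗β∗α⁻¹]` where `α` is a path from `x` and `β` is a loop inside a member of `𝒰`. -/
def spanierGroupAt (x : X) (𝒰 : Set (Set X)) : Subgroup (FundamentalGroup X x) :=
  Subgroup.closure {g | ∃ (y : X) (α : Path x y) (β : Path y y) (U : Set X),
    U ∈ 𝒰 ∧ (∀ t, β t ∈ U) ∧ g = loopClass (α.trans (β.trans α.symm))}

/-- `𝒰` is an open cover of `X`. -/
def IsOpenCover (𝒰 : Set (Set X)) : Prop := (∀ U ∈ 𝒰, IsOpen U) ∧ ⋃₀ 𝒰 = Set.univ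

/-- `X` is a strong `H`-SLT space at `x₀`: for every `x ∈ X` and every open neighborhood `U`
of `x₀` there is an open neighborhood `V` of `x` such that for every loop `β` in `V` based at
`x` and every path `α` from `x₀` to `x` there is a loop `λ` in `U` based at `x₀` with
`[α∗β∗α⁻¹∗λ⁻¹] ∈ H`. -/
def StrongHSLTAt (x₀ : X) (H : Subgroup (FundamentalGroup X x₀)) : Prop :=
  ∀ (x : X) (U : Set X), IsOpen U → x₀ ∈ U →
    ∃ V : Set X, IsOpen V ∧ x ∈ V ∧
      ∀ (β : Path x x), (∀ t, β t ∈ V) → ∀ (α : Path x₀ x),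
        ∃ lam : Path x₀ x₀, (∀ t, lam t ∈ U) ∧
          loopClass (α.trans (β.trans α.symm)) * (loopClass lam)⁻¹ ∈ H

/-- The conjugate subgroup `[δ⁻¹ H δ]` of the fundamental group at the endpoint of `δ`. -/
def conjSubgroup {x₀ x : X} (δ : Path x₀ x) (H : Subgroup (FundamentalGroup X x₀)) :
    Subgroup (FundamentalGroup X x) :=
  H.map (FundamentalGroup.fundamentalGroupMulEquivOfPath δ).toMonoidHom

/-- `X` is a strong `H`-SLT space: for every `x ∈ X` and every path `δ` from `x₀` to `x`,
`X` is a strong `[δ⁻¹Hδ]`-SLT space at `x`. -/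
def StrongHSLT (x₀ : X) (H : Subgroup (FundamentalGroup X x₀)) : Prop :=
  ∀ (x : X) (δ : Path x₀ x), StrongHSLTAt x (conjSubgroup δ H)

/-- A semicovering map: a local homeomorphism with unique continuous lifting of paths
and of homotopies. -/
structure IsSemicoveringMap {E : Type*} [TopologicalSpace E] (p : E → X) : Prop where
  isLocalHomeomorph : IsLocalHomeomorph p
  path_lift : ∀ (γ : C(I, X)) (e : E), p e = γ 0 →
    ∃! γ' : C(I, E), p ∘ γ' = γ ∧ γ' 0 = e
  homotopy_lift : ∀ (Hm : C(I × I, X)) (e : E), p e = Hm (0, 0) →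
    ∃! H' : C(I × I, E), p ∘ H' = Hm ∧ H' (0, 0) = e


/-- homotopy class of a path as an arrow of the fundamental groupoid -/
def harr {a b : X} (γ : Path a b) : FundamentalGroupoid.mk a ⟶ FundamentalGroupoid.mk b :=
  (⟦γ⟧ : Path.Homotopic.Quotient a b)

lemma harr_comp {a b c : X} (γ : Path a b) (γ' : Path b c) :
    harr γ ≫ harr γ' = harr (γ.trans γ') :=
  (Path.Homotopic.Quotient.mk_trans γ γ').symm

lemma harr_eq_of_homotopic {a b : X} {γ₁ γ₂ : Path a b} (h : γ₁.Homotopic γ₂) :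
    harr γ₁ = harr γ₂ := Quotient.sound h

lemma loopClass_hom {x : X} (γ : Path x x) : loopClass γ = harr γ := rfl

lemma loopClass_eq_of_homotopic {x : X} {γ₁ γ₂ : Path x x} (h : γ₁.Homotopic γ₂) :
    loopClass γ₁ = loopClass γ₂ := by
  unfold loopClass
  rw [Quotient.sound h]

lemma homotopic_of_loopClass_eq {x : X} {γ₁ γ₂ : Path x x} (h : loopClass γ₁ = loopClass γ₂) :
    γ₁.Homotopic γ₂ :=
  Quotient.exact (show harr γ₁ = harr γ₂ from h)

lemma loopClass_mul {x : X} (A B : Path x x) :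
    loopClass A * loopClass B = loopClass (B.trans A) := by
  show harr B ≫ harr A = harr (B.trans A)
  exact harr_comp B A

lemma loopClass_refl {x : X} : loopClass (Path.refl x) = 1 := rfl

lemma loopClass_inv {x : X} (A : Path x x) : (loopClass A)⁻¹ = loopClass A.symm := by
  apply inv_eq_of_mul_eq_one_right
  rw [loopClass_mul, ← loopClass_refl]
  exact loopClass_eq_of_homotopic ⟨(Path.Homotopy.reflSymmTrans A).symm⟩

lemma harr_isIso_inv {a b : X} (γ : Path a b) :
    CategoryTheory.inv (harr γ) = harr γ.symm := by
  refine (IsIso.eq_inv_of_hom_inv_id ?_).symm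
  rw [harr_comp]
  show harr (γ.trans γ.symm) = harr (Path.refl a)
  exact harr_eq_of_homotopic ⟨(Path.Homotopy.reflTransSymm γ).symm⟩

lemma conj_loopClass {x₀ x : X} (δ : Path x₀ x) (γ : Path x₀ x₀) :
    FundamentalGroup.fundamentalGroupMulEquivOfPath δ (loopClass γ)
      = loopClass (δ.symm.trans (γ.trans δ)) := by
  show Groupoid.inv (harr δ) ≫ harr γ ≫ harr δ = harr (δ.symm.trans (γ.trans δ))
  rw [Groupoid.inv_eq_inv, harr_isIso_inv, harr_comp, harr_comp]

lemma homotopic_of_map_homotopic {E : Type*} [TopologicalSpace E] {p : E → X}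
    (hcont : Continuous p) (hp : IsSemicoveringMap p) {a b : E} (ga gb : Path a b)
    (h : (ga.map hcont).Homotopic (gb.map hcont)) : ga.Homotopic gb := by
  obtain ⟨F⟩ := h
  -- uniqueness of path lifts
  have uniq : ∀ u v : C(I, E), p ∘ u = p ∘ v → u 0 = v 0 → u = v := by
    intro u v hpe h0
    obtain ⟨c, -, hc⟩ := hp.path_lift ⟨p ∘ u, hcont.comp u.continuous⟩ (u 0) rfl
    rw [hc u ⟨rfl, rfl⟩, hc v ⟨hpe.symm, h0.symm⟩]
  obtain ⟨F', ⟨hF'p, hF'0⟩, -⟩ := hp.homotopy_lift F.toContinuousMap a (by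
    have : F (0, 0) = (ga.map hcont) 0 := F.apply_zero 0
    rw [show F.toContinuousMap (0,0) = F (0,0) from rfl, this]
    simp)
  have hF'pt : ∀ z, p (F' z) = F z := fun z => congrFun hF'p z
  -- bottom row is constant a
  have row0 : ∀ s : I, F' (s, 0) = a := by
    intro s
    have := uniq (F'.comp ⟨fun s => (s, (0:I)), (continuous_id.prodMk continuous_const)⟩)
      (ContinuousMap.const I a) ?_ ?_
    · exact congrFun (congrArg DFunLike.coe this) s
    · funext s
      show p (F' (s, 0)) = p a
      rw [hF'pt]
      have : F (s, 0) = (ga.map hcont) 0 := F.eq_fst s (by simp)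
      rw [this]; simp
    · exact hF'0
  -- left column is ga
  have col0 : ∀ t : I, F' (0, t) = ga t := by
    intro t
    have := uniq (F'.comp ⟨fun t => ((0:I), t), (continuous_const.prodMk continuous_id)⟩)
      ga.toContinuousMap ?_ ?_
    · exact congrFun (congrArg DFunLike.coe this) t
    · funext t
      show p (F' (0, t)) = p (ga t)
      rw [hF'pt]
      exact F.apply_zero t
    · simpa using hF'0
  -- right column is gb
  have col1 : ∀ t : I, F' (1, t) = gb t := by
    intro t
    have := uniq (F'.comp ⟨fun t => ((1:I), t), (continuous_const.prodMk continuous_id)⟩)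
      gb.toContinuousMap ?_ ?_
    · exact congrFun (congrArg DFunLike.coe this) t
    · funext t
      show p (F' (1, t)) = p (gb t)
      rw [hF'pt]
      exact F.apply_one t
    · simpa using row0 1
  -- top row is constant b
  have row1 : ∀ s : I, F' (s, 1) = b := by
    intro s
    have := uniq (F'.comp ⟨fun s => (s, (1:I)), (continuous_id.prodMk continuous_const)⟩)
      (ContinuousMap.const I b) ?_ ?_
    · exact congrFun (congrArg DFunLike.coe this) s
    · funext s
      show p (F' (s, 1)) = p b
      rw [hF'pt]
      have : F (s, 1) = (ga.map hcont) 1 := F.eq_fst s (by simp)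
      rw [this]; simp
    · simpa using col0 1
  exact ⟨{ toFun := F'
           continuous_toFun := F'.continuous
           map_zero_left := col0
           map_one_left := col1
           prop' := by
             intro t x hx
             rcases hx with hx | hx <;> subst hx
             · simpa using (row0 t).trans (by simp [← col0 0, hF'0])
             · simpa using (row1 t).trans (by simp [← col0 1]) }⟩

theorem semicovering_strongHSLT_lifts
    {E : Type*} [TopologicalSpace E]
    (p : E → X) (hcont : Continuous p) (hp : IsSemicoveringMap p)
    (e₀ : E) (x₀ : X) (he : p e₀ = x₀)
    (Ht : Subgroup (FundamentalGroup E e₀)) (H : Subgroup (FundamentalGroup X x₀))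
    (hH : ∀ g, g ∈ H ↔ ∃ γ : Path e₀ e₀, loopClass γ ∈ Ht ∧
      loopClass ((γ.map hcont).cast he.symm he.symm) = g)
    (hX : StrongHSLT x₀ H) : StrongHSLT e₀ Ht := by
  intro e δ e' U hU heU
  obtain ⟨W, heW, hpW⟩ := hp.isLocalHomeomorph e
  have hWsrc : ∀ {z : E}, z ∈ W.source → p z = W z := fun {z} _ => by rw [hpW]
  set δ' : Path x₀ (p e) := (δ.map hcont).cast he.symm rfl with hδ'
  set UX : Set X := ↑W '' (W.source ∩ U) with hUX
  have hUXopen : IsOpen UX :=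
    W.isOpen_image_of_subset_source (W.open_source.inter hU) Set.inter_subset_left
  have hpeUX : p e ∈ UX := ⟨e, ⟨heW, heU⟩, (hWsrc heW).symm⟩
  obtain ⟨V', hV'open, hV'mem, hV'⟩ := hX (p e) δ' (p e') UX hUXopen hpeUX
  refine ⟨p ⁻¹' V', hV'open.preimage hcont, hV'mem, ?_⟩
  intro β hβ α
  obtain ⟨lam', hlam'U, hlam'H⟩ := hV' (β.map hcont) (fun t => hβ t) (α.map hcont)
  have hmemtgt : ∀ t, lam' t ∈ W.target := fun t => by
    obtain ⟨z, hz, hzeq⟩ := hlam'U t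
    exact hzeq ▸ W.map_source hz.1
  have hsymmmem : ∀ t, W.symm (lam' t) ∈ W.source ∩ U := fun t => by
    obtain ⟨z, hz, hzeq⟩ := hlam'U t
    rw [← hzeq, W.left_inv hz.1]; exact hz
  set lam : Path e e :=
    { toFun := fun t => W.symm (lam' t)
      continuous_toFun := W.continuousOn_symm.comp_continuous lam'.continuous hmemtgt
      source' := by
        show W.symm (lam' 0) = e
        rw [lam'.source, hWsrc heW, W.left_inv heW]
      target' := by
        show W.symm (lam' 1) = e
        rw [lam'.target, hWsrc heW, W.left_inv heW] } with hlam
  have hplam : ∀ t, p (lam t) = lam' t := fun t => by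
    have h1 := (hsymmmem t).1
    show p (W.symm (lam' t)) = lam' t
    rw [hWsrc h1, W.right_inv (hmemtgt t)]
  have hlammap : lam.map hcont = lam' := by
    ext t
    exact hplam t
  refine ⟨lam, fun t => (hsymmmem t).2, ?_⟩
  simp only [conjSubgroup, Subgroup.mem_map, MulEquiv.coe_toMonoidHom] at hlam'H ⊢
  obtain ⟨g, hgH, hg⟩ := hlam'H
  obtain ⟨γ, hγHt, hγg⟩ := (hH g).mp hgH
  refine ⟨loopClass γ, hγHt, ?_⟩
  rw [conj_loopClass, loopClass_inv, loopClass_mul]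
  subst hγg
  rw [conj_loopClass, loopClass_inv, loopClass_mul] at hg
  apply loopClass_eq_of_homotopic
  apply homotopic_of_map_homotopic hcont hp
  have hdown := homotopic_of_loopClass_eq hg
  have e1 : (δ.symm.trans (γ.trans δ)).map hcont
      = δ'.symm.trans (((γ.map hcont).cast he.symm he.symm).trans δ') := by
    rw [Path.map_trans, Path.map_trans, ← Path.map_symm]
    ext t
    rfl
  have e2 : (lam.symm.trans (α.trans (β.trans α.symm))).map hcont
      = lam'.symm.trans ((α.map hcont).trans ((β.map hcont).trans (α.map hcont).symm)) := by
    rw [Path.map_trans, Path.map_trans, Path.map_trans, ← Path.map_symm, ← Path.map_symm,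
      hlammap]
  rw [e1, e2]
  exact hdown


end
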